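/- With ξ = k(r - m(s)) < 0, the Eulerian vertical derivative of the density ρ(s,r) = F(e^{2ξ}/(2k) - r + c₀m(s)/c) along the flow map satisfies ∂ρ/∂z = (∂ρ/∂r)·(1 - e^ξ cos θ)/(1 - e^{2ξ}) < 0, assuming F' > 0. -/

import Mathlib

open Real

/-- the Eulerian vertical derivative of the density,
∂ρ/∂z = ρ_r (1 - e^ξ cos θ)/(1 - e^{2ξ}), is strictly negative. -/
theorem density_decreasing_with_height
    (k c c₀ f β fhat g θ : ℝ) (hk : 0 < k) (hc : 0 < c)
    (hghat : 0 < fhat * c₀ + g)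
    (F : ℝ → ℝ) (hF : Differentiable ℝ F) (hF' : ∀ x, 0 < deriv F x)
    (m : ℝ → ℝ)
    (hm : ∀ s, m s = (2 * f * c * s + β * c * s ^ 2) / (2 * (fhat * c₀ + g)))
    (ρ : ℝ → ℝ → ℝ)
    (hρ : ∀ s r, ρ s r =
      F (exp (2 * k * (r - m s)) / (2 * k) - r + c₀ * m s / c)) :
    ∀ s r, k * (r - m s) < 0 →
      deriv (fun r' => ρ s r') r *
        ((1 - exp (k * (r - m s)) * cos θ) / (1 - exp (2 * k * (r - m s)))) < 0 := by
  intro s r hξ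
  set u : ℝ → ℝ := fun r' => exp (2 * k * (r' - m s)) / (2 * k) - r' + c₀ * m s / c
  have hu : HasDerivAt u (exp (2 * k * (r - m s)) - 1) r := by
    have h1 : HasDerivAt (fun r' : ℝ => 2 * k * (r' - m s)) (2 * k) r := by
      simpa using ((hasDerivAt_id r).sub_const (m s)).const_mul (2 * k)
    have h2 : HasDerivAt (fun r' : ℝ => exp (2 * k * (r' - m s)))
        (exp (2 * k * (r - m s)) * (2 * k)) r := h1.exp
    have h3 := (h2.div_const (2 * k)).sub (hasDerivAt_id r)
    have h4 := h3.add_const (c₀ * m s / c)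
    refine h4.congr_deriv ?_
    field_simp [hk.ne']
  have hderiv : deriv (fun r' => ρ s r') r
      = deriv F (u r) * (exp (2 * k * (r - m s)) - 1) := by
    have : (fun r' => ρ s r') = F ∘ u := by
      funext r'; simp [hρ, u, Function.comp]
    rw [this]
    exact (((hF (u r)).hasDerivAt).comp r hu).deriv
  have hξ2 : 2 * k * (r - m s) < 0 := by nlinarith [hξ]
  have he2 : exp (2 * k * (r - m s)) < 1 := by
    simpa using Real.exp_lt_one_iff.mpr hξ2
  have he1 : exp (k * (r - m s)) < 1 := by
    simpa using Real.exp_lt_one_iff.mpr hξ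
  have hnum : 0 < 1 - exp (k * (r - m s)) * cos θ := by
    have h1 : exp (k * (r - m s)) * cos θ ≤ exp (k * (r - m s)) * 1 := by
      have := Real.exp_pos (k * (r - m s))
      nlinarith [Real.cos_le_one θ]
    nlinarith
  have hden : 0 < 1 - exp (2 * k * (r - m s)) := by linarith
  have hfrac : 0 < (1 - exp (k * (r - m s)) * cos θ) / (1 - exp (2 * k * (r - m s))) :=
    div_pos hnum hden
  have hneg : deriv (fun r' => ρ s r') r < 0 := by
    rw [hderiv]
    have := hF' (u r)
    nlinarith
  exact mul_neg_of_neg_of_pos hneg hfrac
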